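/- Let E, Q be finite-dimensional complex inner product spaces, dim Q = r, f : E → Q surjective with f = Σ f_j ⊗ ε_j in an orthonormal basis, σ_j the minimal dual vectors, F = f₁∧...∧f_r ∈ Λ^r E*, and S ∈ Λ^r E the dual element of F with respect to the induced inner product on Λ^r E (i.e., the minimal-norm element with F(S) = |F|² normalized so that S = conjugate-dual of F). Then |F|² · (σ₁ ∧ ... ∧ σ_r) = S, where |F| is the norm of F in Λ^r E*. -/

import Mathlib

open scoped InnerProductSpace
open Matrix Submodule

open Function Finset in
/-- An alternating map applied to a family given by matrix combinations of another family
equals the determinant of the matrix times the value on that family. -/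
theorem alt_map_matrix' {R M N ι : Type*} [CommRing R] [AddCommGroup M] [Module R M]
    [AddCommGroup N] [Module R N] [Fintype ι] [DecidableEq ι]
    (g : M [⋀^ι]→ₗ[R] N) (C : Matrix ι ι R) (w : ι → M) :
    g (fun k => ∑ l, C k l • w l) = C.det • g w := by
  classical
  have h1 : g (fun k => ∑ l, C k l • w l)
      = ∑ p : ι → ι, g (fun k => C k (p k) • w (p k)) := by
    simpa using g.toMultilinearMap.map_sum (g := fun i j => C i j • w j)
  have h2 : ∀ p : ι → ι, g (fun k => C k (p k) • w (p k))
      = (∏ k, C k (p k)) • g (w ∘ p) := fun p => by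
    simpa [Function.comp_def] using g.toMultilinearMap.map_smul_univ (fun k => C k (p k)) (fun k => w (p k))
  rw [h1]
  simp_rw [h2]
  have hzero : ∀ p ∈ Finset.univ, p ∉ Finset.univ.filter Bijective →
      (∏ k, C k (p k)) • g (w ∘ p) = 0 := by
    intro p _ hp
    have hnb : ¬ Bijective p := by simpa using hp
    rw [← Finite.injective_iff_bijective, Injective] at hnb
    push_neg at hnb
    obtain ⟨i, j, hpij, hij⟩ := hnb
    rw [g.map_eq_zero_of_eq (w ∘ p) (congrArg w hpij) hij, smul_zero]
  rw [← Finset.sum_subset (Finset.filter_subset _ _) hzero]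
  have hbij : ∑ p ∈ Finset.univ.filter Bijective, (∏ k, C k (p k)) • g (w ∘ p)
      = ∑ σ : Equiv.Perm ι, (∏ k, C k (σ k)) • g (w ∘ ⇑σ) :=
    Finset.sum_bij (fun (p : ι → ι) (h : p ∈ Finset.univ.filter Bijective) =>
        Equiv.ofBijective p (mem_filter.1 h).2) (fun _ _ => mem_univ _)
        (fun _ _ _ _ h => by injection h)
        (fun b _ => ⟨b, mem_filter.2 ⟨mem_univ _, b.bijective⟩, Equiv.coe_fn_injective rfl⟩)
        (fun p hp => rfl)
  rw [hbij]
  simp_rw [fun σ : Equiv.Perm ι => g.map_perm w σ]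
  rw [← Matrix.det_transpose, Matrix.det_apply, Finset.sum_smul]
  refine Finset.sum_congr rfl fun σ _ => ?_
  rw [smul_comm, ← smul_assoc]
  congr 2

/-- `|F|² · (σ₁ ∧ ⋯ ∧ σ_r) = S`, where `F = f₁∧⋯∧f_r`, `|F|²` is the Gram determinant
of the dual vectors `vⱼ` of the functionals `fⱼ` (`fⱼ ξ = ⟪vⱼ, ξ⟫`),
`S = f₁* ∧ ⋯ ∧ f_r* = v₁ ∧ ⋯ ∧ v_r` is the conjugate-dual element of `F`, and the `σⱼ`
are the minimal dual vectors: `fⱼ(σₖ) = δⱼₖ` with `σⱼ ⊥ ∩ₖ ker fₖ`. -/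
theorem stmt13 {E : Type*} [NormedAddCommGroup E] [InnerProductSpace ℂ E]
    [FiniteDimensional ℂ E] {r : ℕ}
    (fj : Fin r → Module.Dual ℂ E)
    (v : Fin r → E) (hv : ∀ j x, fj j x = ⟪v j, x⟫_ℂ)
    (σ : Fin r → E)
    (hdual : ∀ j k, fj j (σ k) = if j = k then 1 else 0)
    (hmin : ∀ j, σ j ∈ (⨅ k, LinearMap.ker (fj k))ᗮ) :
    (Matrix.det (Matrix.of fun j k : Fin r => ⟪v j, v k⟫_ℂ)) •
        ExteriorAlgebra.ιMulti ℂ r σ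
      = ExteriorAlgebra.ιMulti ℂ r v := by
  classical
  have hker : (⨅ k, LinearMap.ker (fj k)) = (Submodule.span ℂ (Set.range v))ᗮ := by
    have h1 : ∀ k, LinearMap.ker (fj k) = (ℂ ∙ v k)ᗮ := fun k => by
      ext x
      simp [LinearMap.mem_ker, hv, Submodule.mem_orthogonal_singleton_iff_inner_right]
    simp_rw [h1, Submodule.iInf_orthogonal, Submodule.span_range_eq_iSup]
  have hspan : ∀ k, σ k ∈ Submodule.span ℂ (Set.range v) := by
    intro k
    have := hmin k
    rw [hker, Submodule.orthogonal_orthogonal] at this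
    exact this
  have hc : ∀ k, ∃ c : Fin r → ℂ, ∑ l, c l • v l = σ k := fun k =>
    (mem_span_range_iff_exists_fun ℂ (v := v)).mp (hspan k)
  choose c hc using hc
  set C : Matrix (Fin r) (Fin r) ℂ := Matrix.of c with hC
  set G : Matrix (Fin r) (Fin r) ℂ := Matrix.of (fun j k => ⟪v j, v k⟫_ℂ) with hG
  have hGC : G * Cᵀ = 1 := by
    ext j k
    have : (fj j) (σ k) = ∑ l, c k l * ⟪v j, v l⟫_ℂ := by
      rw [← hc k, hv]
      simp [inner_sum, inner_smul_right, mul_comm]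
    rw [hdual] at this
    simp only [Matrix.mul_apply, Matrix.transpose_apply, Matrix.one_apply, hG, hC, Matrix.of_apply]
    rw [this]
    exact Finset.sum_congr rfl fun l _ => mul_comm _ _
  have hdet : G.det * C.det = 1 := by
    have := congrArg Matrix.det hGC
    rwa [Matrix.det_mul, Matrix.det_transpose, Matrix.det_one] at this
  have hσ : σ = fun k => ∑ l, C k l • v l := funext fun k => (hc k).symm
  rw [hσ, alt_map_matrix' (ExteriorAlgebra.ιMulti ℂ r) C v, smul_smul, hdet, one_smul]
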